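/- Let G be a locally compact abelian group and let f: G → ℂ be a bounded uniformly continuous function. Then the following are equivalent: (i) f is Bohr almost periodic, i.e. for every ε > 0 the set {t ∈ G : sup_{x ∈ G} |f(x − t) − f(x)| < ε} is relatively dense in G; (ii) f is Bochner almost periodic, i.e. the set {T_t f : t ∈ G} of all translates of f has compact closure in the Banach space of bounded uniformly continuous functions on G with the supremum norm, where (T_t f)(x) = f(x − t). -/

import Mathlib

open Pointwise

open UniformConvergence Uniformity Topology

/-- For a bounded uniformly continuous function `f : G → ℂ` on a locally
compact abelian group `G`, Bohr almost periodicity (relative denseness of the sets of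
`ε`-almost periods for the supremum norm) is equivalent to Bochner almost periodicity
(compactness of the closure of the set of translates of `f` in the supremum-norm topology,
i.e. in the space of functions with the uniformity of uniform convergence). -/
theorem stmt16 {G : Type*}
    [AddCommGroup G] [TopologicalSpace G] [IsTopologicalAddGroup G]
    [LocallyCompactSpace G] [T2Space G]
    (f : G → ℂ)
    (hbdd : ∃ C : ℝ, ∀ x : G, ‖f x‖ ≤ C)
    (huc : ∀ ε > (0 : ℝ), ∃ O : Set G, IsOpen O ∧ (0 : G) ∈ O ∧
      ∀ x y : G, x - y ∈ O → ‖f x - f y‖ < ε) :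
    -- (i) Bohr almost periodicity
    (∀ ε > (0 : ℝ), ∃ K : Set G, IsCompact K ∧
      {t : G | (⨆ x : G, ‖f (x - t) - f x‖) < ε} + K = Set.univ)
      ↔
    -- (ii) Bochner almost periodicity
    IsCompact (closure (Set.range fun t : G => UniformFun.ofFun fun x : G => f (x - t))) := by
  obtain ⟨C, hC⟩ := hbdd
  set F : G → (G →ᵤ ℂ) := fun t => UniformFun.ofFun fun x : G => f (x - t) with hFdef
  have hbddsup : ∀ p : G, BddAbove (Set.range fun x : G => ‖f (x - p) - f x‖) := by
    intro p
    refine ⟨C + C, ?_⟩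
    rintro _ ⟨x, rfl⟩
    calc ‖f (x - p) - f x‖ ≤ ‖f (x - p)‖ + ‖f x‖ :=
          by simpa using norm_sub_le (f (x - p)) (f x)
      _ ≤ C + C := add_le_add (hC _) (hC _)
  constructor
  · intro hBohr
    -- continuity of the translation map F
    have hcont : Continuous F := by
      rw [continuous_iff_continuousAt]
      intro t₀
      rw [ContinuousAt,
        (UniformFun.hasBasis_nhds_of_basis G ℂ (F t₀)
          Metric.uniformity_basis_dist).tendsto_right_iff]
      intro ε hε
      obtain ⟨O, hO, h0O, hOf⟩ := huc ε hε
      have hmem : {t : G | t - t₀ ∈ O} ∈ 𝓝 t₀ := by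
        have hop : IsOpen {t : G | t - t₀ ∈ O} := hO.preimage (continuous_sub_right t₀)
        exact hop.mem_nhds (by simpa using h0O)
      filter_upwards [hmem] with t ht
      intro x
      have h := hOf (x - t₀) (x - t) (by simpa using ht)
      simpa [UniformFun.gen, Complex.dist_eq, F] using h
    have htb : TotallyBounded (Set.range F) := by
      intro V hV
      obtain ⟨ε, hε, hεV⟩ :=
        (UniformFun.hasBasis_uniformity_of_basis G ℂ Metric.uniformity_basis_dist).mem_iff.mp hV
      obtain ⟨K, hK, hPK⟩ := hBohr (ε / 3) (by positivity)
      have hKim : IsCompact (F '' K) := hK.image hcont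
      have hgen : (UniformFun.gen G ℂ {p : ℂ × ℂ | dist p.1 p.2 < ε / 3}) ∈ 𝓤 (G →ᵤ ℂ) :=
        (UniformFun.hasBasis_uniformity_of_basis G ℂ Metric.uniformity_basis_dist).mem_of_mem
          (by positivity : (0:ℝ) < ε / 3)
      obtain ⟨T, hTfin, hTcov⟩ := hKim.totallyBounded _ hgen
      refine ⟨T, hTfin, ?_⟩
      rintro _ ⟨t, rfl⟩
      have ht : t ∈ {p : G | (⨆ x : G, ‖f (x - p) - f x‖) < ε / 3} + K := by
        rw [hPK]; exact Set.mem_univ t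
      obtain ⟨p, hp, k, hk, rfl⟩ := ht
      have hFk : F k ∈ F '' K := ⟨k, hk, rfl⟩
      obtain ⟨y, hyT, hy⟩ := Set.mem_iUnion₂.mp (hTcov hFk)
      refine Set.mem_iUnion₂.mpr ⟨y, hyT, hεV ?_⟩
      intro x
      have h1 : dist (f (x - (p + k))) (f (x - k)) < ε / 3 := by
        have hle : ‖f ((x - k) - p) - f (x - k)‖ ≤
            ⨆ u : G, ‖f (u - p) - f u‖ :=
          le_ciSup (hbddsup p) (x - k)
        have : ‖f ((x - k) - p) - f (x - k)‖ < ε / 3 := lt_of_le_of_lt hle hp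
        have hxx : x - (p + k) = (x - k) - p := by abel
        rw [Complex.dist_eq, hxx]
        exact this
      have h2 : dist (UniformFun.toFun (F k) x) ((UniformFun.toFun y) x) < ε / 3 := hy x
      show dist (UniformFun.toFun (F (p + k)) x) ((UniformFun.toFun y) x) < ε
      calc dist (UniformFun.toFun (F (p + k)) x) ((UniformFun.toFun y) x)
          ≤ dist (UniformFun.toFun (F (p + k)) x) (UniformFun.toFun (F k) x) + dist (UniformFun.toFun (F k) x) ((UniformFun.toFun y) x) :=
            dist_triangle _ _ _
        _ < ε / 3 + ε / 3 := add_lt_add h1 h2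
        _ < ε := by linarith
    exact htb.closure.isCompact_of_isClosed isClosed_closure
  · intro hcpt ε hε
    have htb : TotallyBounded (Set.range F) :=
      (hcpt.totallyBounded).subset subset_closure
    have hgen : (UniformFun.gen G ℂ {p : ℂ × ℂ | dist p.1 p.2 < ε / 2}) ∈ 𝓤 (G →ᵤ ℂ) :=
      (UniformFun.hasBasis_uniformity_of_basis G ℂ Metric.uniformity_basis_dist).mem_of_mem
        (by positivity : (0:ℝ) < ε / 2)
    obtain ⟨T, hTsub, hTfin, hTcov⟩ := totallyBounded_iff_subset.mp htb _ hgen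
    choose g hg using fun y : T => hTsub y.2
    have : Finite T := hTfin.to_subtype
    refine ⟨Set.range g, (Set.finite_range g).isCompact, ?_⟩
    apply Set.eq_univ_of_forall
    intro t
    obtain ⟨y, hyT, hy⟩ := Set.mem_iUnion₂.mp (hTcov ⟨t, rfl⟩)
    set k : G := g ⟨y, hyT⟩ with hkdef
    have hFk : F k = y := hg ⟨y, hyT⟩
    have hdy : ∀ x : G, dist (f (x - t)) (f (x - k)) < ε / 2 := by
      intro x
      have := hy x
      rw [← hFk] at this
      simpa [UniformFun.gen, F] using this
    have hp : (t - k) ∈ {p : G | (⨆ x : G, ‖f (x - p) - f x‖) < ε} := by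
      have hsup : (⨆ x : G, ‖f (x - (t - k)) - f x‖) ≤ ε / 2 := by
        apply Real.iSup_le _ (by positivity)
        intro u
        have h := hdy (u + k)
        have h1 : u + k - t = u - (t - k) := by abel
        have h2 : u + k - k = u := by abel
        rw [Complex.dist_eq] at h
        rw [h1, h2] at h
        have : ‖f (u - (t - k)) - f u‖ < ε / 2 := by
          simpa [norm_sub_rev] using h
        exact this.le
      exact lt_of_le_of_lt hsup (by linarith)
    have hk : k ∈ Set.range g := ⟨⟨y, hyT⟩, rfl⟩
    have : (t - k) + k ∈ {p : G | (⨆ x : G, ‖f (x - p) - f x‖) < ε} + Set.range g :=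
      Set.add_mem_add hp hk
    simpa using this
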